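/- Let a be a nonzero integer and let K = ℚ(ζ₃) be the third cyclotomic field. Then a is not a square in K (i.e., there is no b ∈ K with b² = a) if and only if E_a(K)[3] = 0, i.e., the only point P of E_a(K) with 3 • P = 0 is the zero point. -/

import Mathlib

open WeierstrassCurve.Affine

/-- The elliptic curve `y² = x³ + a` over a field `F`. -/
def Ea (F : Type*) [Field F] (a : F) : WeierstrassCurve.Affine F :=
  { a₁ := 0, a₂ := 0, a₃ := 0, a₄ := 0, a₆ := a }

section aux

variable {F : Type*} [Field F] [CharZero F] [DecidableEq F] {a : F}

omit [CharZero F] in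
lemma Ea_negY (x y : F) : (Ea F a).negY x y = -y := by
  simp [Ea, WeierstrassCurve.Affine.negY]

omit [CharZero F] in
lemma Ea_equation {x y : F} : (Ea F a).Equation x y ↔ y ^ 2 = x ^ 3 + a := by
  rw [equation_iff]
  simp only [Ea]
  constructor <;> intro h <;> linear_combination h

lemma Ea_Yne {x y : F} (hy : y ≠ 0) : y ≠ (Ea F a).negY x y := by
  rw [Ea_negY]
  intro hc
  exact hy (by linear_combination hc / 2)

lemma Ea_nonsingular {x y : F} (h : y ^ 2 = x ^ 3 + a) (hy : y ≠ 0) :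
    (Ea F a).Nonsingular x y := by
  rw [nonsingular_iff]
  exact ⟨Ea_equation.mpr h, Or.inr (Ea_Yne hy)⟩

lemma three_smul_eq {G : Type*} [AddCommGroup G] (P : G) : 3 • P = P + P + P := by
  rw [succ_nsmul, two_nsmul]

/-- If `a` is a square, the curve has a nontrivial 3-torsion point. -/
lemma Ea_exists_tor {b : F} (hb : b ^ 2 = a) (hb0 : b ≠ 0) :
    ∃ P : (Ea F a).Point, P ≠ 0 ∧ 3 • P = 0 := by
  have hns : (Ea F a).Nonsingular 0 b := Ea_nonsingular (by rw [hb]; ring) hb0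
  refine ⟨Point.some _ _ hns, Point.some_ne_zero hns, ?_⟩
  rw [three_smul_eq, Point.add_self_of_Y_ne (Ea_Yne hb0)]
  rw [Point.add_of_Y_eq ?hx ?hy]
  case hx =>
    rw [slope_of_Y_ne rfl (Ea_Yne hb0)]
    simp [Ea, WeierstrassCurve.Affine.addX]
  case hy =>
    rw [slope_of_Y_ne rfl (Ea_Yne hb0)]
    simp [Ea, WeierstrassCurve.Affine.addY, WeierstrassCurve.Affine.negAddY,
      WeierstrassCurve.Affine.addX, WeierstrassCurve.Affine.negY]

/-- A nontrivial 3-torsion point satisfies `y ≠ 0`, `y² = x³ + a`, `x(x³+4a) = 0`. -/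
lemma Ea_tor_x {x y : F} (hns : (Ea F a).Nonsingular x y)
    (h3 : 3 • (Point.some _ _ hns : (Ea F a).Point) = 0) :
    y ≠ 0 ∧ y ^ 2 = x ^ 3 + a ∧ x * (x ^ 3 + 4 * a) = 0 := by
  have heq : y ^ 2 = x ^ 3 + a := Ea_equation.mp hns.1
  have h2 : Point.some _ _ hns + Point.some _ _ hns = -Point.some _ _ hns := by
    rw [eq_neg_iff_add_eq_zero, ← h3, three_smul_eq]
  have hy0 : y ≠ 0 := by
    intro hy
    rw [Point.add_self_of_Y_eq (by rw [Ea_negY, hy, neg_zero])] at h2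
    exact Point.some_ne_zero hns (by rwa [eq_comm, neg_eq_zero] at h2)
  refine ⟨hy0, heq, ?_⟩
  rw [Point.add_self_of_Y_ne (Ea_Yne hy0), Point.neg_some] at h2
  rw [Point.some.injEq] at h2
  obtain ⟨hx, -⟩ := h2
  rw [slope_of_Y_ne rfl (Ea_Yne hy0)] at hx
  simp only [Ea, WeierstrassCurve.Affine.addX, WeierstrassCurve.Affine.negY] at hx
  have h2y : y + y ≠ 0 := fun hc => hy0 (by linear_combination hc / 2)
  have hd : y - (-y - 0 * x - 0) = 2 * y := by ring
  rw [hd, div_pow] at hx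
  have h2y' : (2 * y) ^ 2 ≠ 0 := pow_ne_zero 2 (mul_ne_zero two_ne_zero hy0)
  have e := congrArg (· * (2 * y) ^ 2) hx
  simp only [sub_mul, add_mul, div_mul_cancel₀ _ h2y'] at e
  linear_combination -e/3 - 4*x*heq

end aux

open Classical in
theorem stmt1 (a : ℤ) (ha : a ≠ 0) :
    (¬ ∃ b : CyclotomicField 3 ℚ, b ^ 2 = (a : CyclotomicField 3 ℚ)) ↔
      ∀ P : (Ea (CyclotomicField 3 ℚ) (a : CyclotomicField 3 ℚ)).Point, 3 • P = 0 → P = 0 := by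
  set K := CyclotomicField 3 ℚ
  have haK : (a : K) ≠ 0 := Int.cast_ne_zero.mpr ha
  constructor
  · intro hsq P h3
    by_contra hP0
    cases P with
    | zero => exact hP0 rfl
    | @some x y hns =>
      obtain ⟨hy0, heq, hkey⟩ := Ea_tor_x hns h3
      rcases mul_eq_zero.mp hkey with hx0 | hx4
      · exact hsq ⟨y, by rw [heq, hx0]; ring⟩
      · have hy2 : y ^ 2 = -3 * a := by linear_combination heq + hx4
        haveI : IsCyclotomicExtension {3} ℚ K := CyclotomicField.isCyclotomicExtension 3 ℚ
        set ζ := IsCyclotomicExtension.zeta 3 ℚ K with hζdef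
        have hζ : IsPrimitiveRoot ζ 3 := IsCyclotomicExtension.zeta_spec 3 ℚ K
        have hζ3 : ζ ^ 3 = 1 := hζ.pow_eq_one
        have hζ1 : ζ ≠ 1 := hζ.ne_one (by norm_num)
        have hsum : ζ ^ 2 + ζ + 1 = 0 :=
          (mul_eq_zero.mp (show (ζ - 1) * (ζ ^ 2 + ζ + 1) = 0 by
            linear_combination hζ3)).resolve_left (sub_ne_zero.mpr hζ1)
        have hs3 : (2 * ζ + 1) ^ 2 = -3 := by linear_combination 4 * hsum
        have hz0 : (2 * ζ + 1) ≠ 0 := by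
          intro hc
          rw [hc] at hs3
          norm_num at hs3
        refine hsq ⟨y / (2 * ζ + 1), ?_⟩
        rw [div_pow, hy2, hs3]
        field_simp
  · intro htor
    rintro ⟨b, hb⟩
    have hb0 : b ≠ 0 := fun hc => haK (by rw [← hb, hc]; ring)
    obtain ⟨P, hP0, h3⟩ := Ea_exists_tor hb hb0
    exact hP0 (htor P h3)
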